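/- Define S(z1, z1', z3) = α(z1, z3) + β(z1', z3) where α(z1,z3) = arccos(-z1 z3/(sqrt(1+z1^2) sqrt(1+z3^2))) and β(z1',z3) = π - α(z1', z3). If z1' < z1 (convexity of the adjacent edges), then S is a strictly increasing function of z3, and S = π at z3 = 0. -/

import Mathlib

open Real

/-- monotonicity of `x ↦ x / √(d + e x²)`. -/
lemma ratio_mono (d e x y : ℝ) (hd : 0 < d) (hx : 0 < d + e * x ^ 2)
    (hy : 0 < d + e * y ^ 2) (hxy : x < y) :
    x / Real.sqrt (d + e * x ^ 2) < y / Real.sqrt (d + e * y ^ 2) := by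
  have hA : 0 < Real.sqrt (d + e * x ^ 2) := Real.sqrt_pos.mpr hx
  have hB : 0 < Real.sqrt (d + e * y ^ 2) := Real.sqrt_pos.mpr hy
  have hA2 : (Real.sqrt (d + e * x ^ 2)) ^ 2 = d + e * x ^ 2 := Real.sq_sqrt hx.le
  have hB2 : (Real.sqrt (d + e * y ^ 2)) ^ 2 = d + e * y ^ 2 := Real.sq_sqrt hy.le
  rw [div_lt_div_iff₀ hA hB]
  set A := Real.sqrt (d + e * x ^ 2)
  set B := Real.sqrt (d + e * y ^ 2)
  rcases le_or_gt 0 x with hx0 | hx0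
  · have hy0 : 0 < y := lt_of_le_of_lt hx0 hxy
    have hsq : (x * B) ^ 2 < (y * A) ^ 2 := by
      have : (y * A) ^ 2 - (x * B) ^ 2 = d * (y ^ 2 - x ^ 2) := by
        rw [mul_pow, mul_pow, hA2, hB2]; ring
      nlinarith [mul_pos hd (mul_pos (sub_pos.mpr hxy) (by linarith : (0:ℝ) < y + x))]
    exact lt_of_pow_lt_pow_left₀ 2 (mul_pos hy0 hA).le hsq
  · rcases le_or_gt y 0 with hy0 | hy0
    · have hsq : (-(y * A)) ^ 2 < (-(x * B)) ^ 2 := by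
        have : (x * B) ^ 2 - (y * A) ^ 2 = d * (x ^ 2 - y ^ 2) := by
          rw [mul_pow, mul_pow, hA2, hB2]; ring
        nlinarith [mul_pos hd (mul_pos (sub_pos.mpr hxy) (by linarith : (0:ℝ) < -(x + y)))]
      have := lt_of_pow_lt_pow_left₀ 2 (by nlinarith [mul_pos hA hB] : (0:ℝ) ≤ -(x*B)) hsq
      linarith
    · nlinarith [mul_pos hA hB, mul_pos hy0 hA, mul_pos (neg_pos.mpr hx0) hB]

lemma abs_lt_sqrt_one_add_sq (z : ℝ) : |z| < Real.sqrt (1 + z ^ 2) := by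
  rw [show |z| = Real.sqrt (z^2) by rw [Real.sqrt_sq_eq_abs]]
  exact Real.sqrt_lt_sqrt (sq_nonneg z) (by linarith)

set_option maxHeartbeats 2000000 in
theorem two_quads_angle_sum (z1 z1' : ℝ) (hconv : z1' < z1)
    (S : ℝ → ℝ)
    (hS : ∀ z3, S z3 =
      Real.arccos (-z1 * z3 / (Real.sqrt (1 + z1 ^ 2) * Real.sqrt (1 + z3 ^ 2))) +
      Real.arccos (z1' * z3 / (Real.sqrt (1 + z1' ^ 2) * Real.sqrt (1 + z3 ^ 2)))) :
    StrictMono S ∧ S 0 = Real.pi := by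
  have ha : 0 < Real.sqrt (1 + z1 ^ 2) := Real.sqrt_pos.mpr (by positivity)
  have hb : 0 < Real.sqrt (1 + z1' ^ 2) := Real.sqrt_pos.mpr (by positivity)
  set c1 : ℝ := z1 / Real.sqrt (1 + z1 ^ 2) with hc1def
  set c2 : ℝ := z1' / Real.sqrt (1 + z1' ^ 2) with hc2def
  have hc1 : |c1| < 1 := by
    rw [hc1def, abs_div, abs_of_pos ha, div_lt_one ha]
    exact abs_lt_sqrt_one_add_sq z1
  have hc2 : |c2| < 1 := by
    rw [hc2def, abs_div, abs_of_pos hb, div_lt_one hb]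
    exact abs_lt_sqrt_one_add_sq z1'
  have hc21 : c2 < c1 := by
    have := ratio_mono 1 1 z1' z1 one_pos (by positivity) (by positivity) hconv
    simpa [one_mul] using this
  set T : ℝ → ℝ := fun z => z / Real.sqrt (1 + z ^ 2) with hTdef
  have hTabs : ∀ z, |T z| < 1 := by
    intro z
    have hs : 0 < Real.sqrt (1 + z ^ 2) := Real.sqrt_pos.mpr (by positivity)
    rw [hTdef]
    simp only []
    rw [abs_div, abs_of_pos hs, div_lt_one hs]
    exact abs_lt_sqrt_one_add_sq z
  have harg1 : ∀ z, -z1 * z / (Real.sqrt (1 + z1 ^ 2) * Real.sqrt (1 + z ^ 2))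
      = -(c1 * T z) := by
    intro z
    have hs : 0 < Real.sqrt (1 + z ^ 2) := Real.sqrt_pos.mpr (by positivity)
    rw [hc1def, hTdef]
    field_simp
  have harg2 : ∀ z, z1' * z / (Real.sqrt (1 + z1' ^ 2) * Real.sqrt (1 + z ^ 2))
      = c2 * T z := by
    intro z
    have hs : 0 < Real.sqrt (1 + z ^ 2) := Real.sqrt_pos.mpr (by positivity)
    rw [hc2def, hTdef]
    field_simp
  have habs_mul : ∀ c z : ℝ, |c| < 1 → |c * T z| < 1 := by
    intro c z hc
    rw [abs_mul]
    nlinarith [abs_nonneg c, abs_nonneg (T z), hTabs z]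
  constructor
  · have key : StrictMono (fun z =>
        Real.arccos (-(c1 * T z)) + Real.arccos (c2 * T z)) := by
      apply strictMono_of_deriv_pos
      intro z
      have hs : 0 < Real.sqrt (1 + z ^ 2) := Real.sqrt_pos.mpr (by positivity)
      have hs2 : (Real.sqrt (1 + z ^ 2)) ^ 2 = 1 + z ^ 2 := Real.sq_sqrt (by positivity)
      have hinner : HasDerivAt (fun z : ℝ => 1 + z ^ 2) (2 * z) z := by
        simpa using ((hasDerivAt_pow 2 z).const_add 1)
      have hsqrt : HasDerivAt (fun z : ℝ => Real.sqrt (1 + z ^ 2))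
          (1 / (2 * Real.sqrt (1 + z ^ 2)) * (2 * z)) z :=
        (Real.hasDerivAt_sqrt (by positivity)).comp z hinner
      have hT : HasDerivAt T
          ((1 * Real.sqrt (1 + z ^ 2) - z * (1 / (2 * Real.sqrt (1 + z ^ 2)) * (2 * z)))
            / (Real.sqrt (1 + z ^ 2)) ^ 2) z :=
        (hasDerivAt_id z).div hsqrt (ne_of_gt hs)
      set Tp : ℝ := (1 * Real.sqrt (1 + z ^ 2) - z * (1 / (2 * Real.sqrt (1 + z ^ 2)) * (2 * z)))
            / (Real.sqrt (1 + z ^ 2)) ^ 2 with hTpdef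
      have hTp_pos : 0 < Tp := by
        rw [hTpdef]
        apply div_pos _ (by positivity)
        have : z * (1 / (2 * Real.sqrt (1 + z ^ 2)) * (2 * z)) = z ^ 2 / Real.sqrt (1 + z ^ 2) := by
          field_simp
        rw [this, one_mul, sub_pos, div_lt_iff₀ hs]
        nlinarith
      have h1' := abs_lt.mp (habs_mul c1 z hc1)
      have h2' := abs_lt.mp (habs_mul c2 z hc2)
      have hA : 0 < Real.sqrt (1 - (c1 * T z) ^ 2) := Real.sqrt_pos.mpr (by nlinarith)
      have hB : 0 < Real.sqrt (1 - (c2 * T z) ^ 2) := Real.sqrt_pos.mpr (by nlinarith)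
      have hd1 : HasDerivAt (fun z => Real.arccos (-(c1 * T z)))
          (-(1 / Real.sqrt (1 - (-(c1 * T z)) ^ 2)) * (-(c1 * Tp))) z :=
        (Real.hasDerivAt_arccos (by intro h; linarith [h1'.2]) (by intro h; linarith [h1'.1])).comp
          z ((hT.const_mul c1).neg)
      have hd2 : HasDerivAt (fun z => Real.arccos (c2 * T z))
          (-(1 / Real.sqrt (1 - (c2 * T z) ^ 2)) * (c2 * Tp)) z :=
        (Real.hasDerivAt_arccos (by intro h; linarith [h2'.1]) (by intro h; linarith [h2'.2])).comp
          z (hT.const_mul c2)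
      have hF := hd1.add hd2
      rw [HasDerivAt.deriv (f := fun z => Real.arccos (-(c1 * T z)) + Real.arccos (c2 * T z)) hF]
      have hE : -(1 / Real.sqrt (1 - (-(c1 * T z)) ^ 2)) * (-(c1 * Tp))
            + -(1 / Real.sqrt (1 - (c2 * T z) ^ 2)) * (c2 * Tp)
          = (c1 / Real.sqrt (1 - (c1 * T z) ^ 2) - c2 / Real.sqrt (1 - (c2 * T z) ^ 2)) * Tp := by
        rw [neg_sq]; ring
      rw [hE]
      have hkey : c2 / Real.sqrt (1 - (c2 * T z) ^ 2) < c1 / Real.sqrt (1 - (c1 * T z) ^ 2) := by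
        have := ratio_mono 1 (-((T z) ^ 2)) c2 c1 (by norm_num : (0:ℝ) < 1) (by nlinarith [h2'.1, h2'.2]) (by nlinarith [h1'.1, h1'.2]) hc21
        rw [show (1 + -((T z) ^ 2) * c2 ^ 2 : ℝ) = 1 - (c2 * T z) ^ 2 from by ring,
          show (1 + -((T z) ^ 2) * c1 ^ 2 : ℝ) = 1 - (c1 * T z) ^ 2 from by ring] at this
        exact this
      exact mul_pos (sub_pos.mpr hkey) hTp_pos
    intro p q hpq
    rw [hS p, hS q, harg1 p, harg2 p, harg1 q, harg2 q]
    exact key hpq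
  · rw [hS]
    norm_num
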